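/- Under the hypotheses of the push-forward theorem (B ⊆ A a faithfully flat H-Galois extension, F: B → C an algebra map, ψ a twisting map which is an H-comodule morphism with \barψ a B-bimodule morphism satisfying \barψ(1_A⊗c) = c⊗_B1_A, \barψ(a⊗1_C) = 1_C⊗_Ba and \barψ(a⊗cc') = c^ψ·\barψ(a^ψ⊗c')), let τ(h) = h^{⟨1⟩}⊗_Bh^{⟨2⟩} denote the translation map of B ⊆ A. Then the translation map of the H-Galois extension C ⊆ C⊗^ψ_BA is τ^ψ: H → (C⊗^ψ_BA)⊗_C(C⊗^ψ_BA), τ^ψ(h) = (1_C⊗_Bh^{⟨1⟩})⊗_C(1_C⊗_Bh^{⟨2⟩}); that is, χ^ψ(τ^ψ(h)) = (1_C⊗_B1_A)⊗h for all h∈H, and (m^ψ⊗_C id)∘(id⊗τ^ψ)∘χ^ψ is the identity on (C⊗^ψ_BA)⊗_C(C⊗^ψ_BA). -/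

import Mathlib

open TensorProduct LinearMap Function

noncomputable section
namespace Paper

variable (k : Type*) [Field k]
section Twist
variable (A : Type*) [Ring A] [Algebra k A] (C : Type*) [Ring C] [Algebra k C]

/-- The twisted multiplication `m^ψ := (m_C ⊗ m_A) ∘ (id_C ⊗ ψ ⊗ id_A)` as a linear map
`(C ⊗ A) ⊗ (C ⊗ A) → C ⊗ A`. -/
def tmulMap (ψ : A ⊗[k] C →ₗ[k] C ⊗[k] A) :
    (C ⊗[k] A) ⊗[k] (C ⊗[k] A) →ₗ[k] C ⊗[k] A :=
  TensorProduct.map (LinearMap.mul' k C) (LinearMap.mul' k A)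
    ∘ₗ (TensorProduct.assoc k (C ⊗[k] C) A A).toLinearMap
    ∘ₗ TensorProduct.map (TensorProduct.assoc k C C A).symm.toLinearMap LinearMap.id
    ∘ₗ TensorProduct.map (LinearMap.lTensor C ψ) LinearMap.id
    ∘ₗ TensorProduct.map (TensorProduct.assoc k C A C).toLinearMap LinearMap.id
    ∘ₗ (TensorProduct.assoc k (C ⊗[k] A) C A).symm.toLinearMap

/-- The twisted product of two elements of `C ⊗ A`. -/
def tmul (ψ : A ⊗[k] C →ₗ[k] C ⊗[k] A) (x y : C ⊗[k] A) : C ⊗[k] A :=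
  tmulMap k A C ψ (x ⊗ₜ y)

/-- `ψ` is a twisting map when the product `m^ψ` is associative. -/
def IsTwistingMap (ψ : A ⊗[k] C →ₗ[k] C ⊗[k] A) : Prop :=
  ∀ x y z : C ⊗[k] A,
    tmul k A C ψ (tmul k A C ψ x y) z = tmul k A C ψ x (tmul k A C ψ y z)

/-- `ψ (a ⊗ 1_C) = 1_C ⊗ a`. -/
def LeftNormal (ψ : A ⊗[k] C →ₗ[k] C ⊗[k] A) : Prop :=
  ∀ a : A, ψ (a ⊗ₜ (1 : C)) = (1 : C) ⊗ₜ a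

/-- `ψ (1_A ⊗ c) = c ⊗ 1_A`. -/
def RightNormal (ψ : A ⊗[k] C →ₗ[k] C ⊗[k] A) : Prop :=
  ∀ c : C, ψ ((1 : A) ⊗ₜ c) = c ⊗ₜ (1 : A)

/-- Distributive law (C1): `ψ ∘ (m_A ⊗ id_C) = (id_C ⊗ m_A) ∘ (ψ ⊗ id_A) ∘ (id_A ⊗ ψ)`. -/
def DistLawC1 (ψ : A ⊗[k] C →ₗ[k] C ⊗[k] A) : Prop :=
  ψ ∘ₗ rTensor C (LinearMap.mul' k A)
    = lTensor C (LinearMap.mul' k A)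
        ∘ₗ (TensorProduct.assoc k C A A).toLinearMap
        ∘ₗ rTensor A ψ
        ∘ₗ (TensorProduct.assoc k A C A).symm.toLinearMap
        ∘ₗ lTensor A ψ
        ∘ₗ (TensorProduct.assoc k A A C).toLinearMap

/-- Distributive law (C2): `ψ ∘ (id_A ⊗ m_C) = (m_C ⊗ id_A) ∘ (id_C ⊗ ψ) ∘ (ψ ⊗ id_C)`. -/
def DistLawC2 (ψ : A ⊗[k] C →ₗ[k] C ⊗[k] A) : Prop :=
  ψ ∘ₗ lTensor A (LinearMap.mul' k C)
    = rTensor A (LinearMap.mul' k C)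
        ∘ₗ (TensorProduct.assoc k C C A).symm.toLinearMap
        ∘ₗ lTensor C ψ
        ∘ₗ (TensorProduct.assoc k C A C).toLinearMap
        ∘ₗ rTensor C ψ
        ∘ₗ (TensorProduct.assoc k A C C).symm.toLinearMap

/-- The left-hand side of the associativity condition (Oeq):
`(id_C ⊗ m_A) ∘ (ψ ⊗ id_A) ∘ (id_A ⊗ m_C ⊗ id_A) ∘ (id_A ⊗ id_C ⊗ ψ)`. -/
def OeqLHS (ψ : A ⊗[k] C →ₗ[k] C ⊗[k] A) :
    (A ⊗[k] C) ⊗[k] (A ⊗[k] C) →ₗ[k] C ⊗[k] A :=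
  lTensor C (LinearMap.mul' k A)
    ∘ₗ (TensorProduct.assoc k C A A).toLinearMap
    ∘ₗ rTensor A ψ
    ∘ₗ TensorProduct.map (lTensor A (LinearMap.mul' k C)) LinearMap.id
    ∘ₗ TensorProduct.map (TensorProduct.assoc k A C C).toLinearMap LinearMap.id
    ∘ₗ (TensorProduct.assoc k (A ⊗[k] C) C A).symm.toLinearMap
    ∘ₗ lTensor (A ⊗[k] C) ψ

/-- The right-hand side of the associativity condition (Oeq):
`(m_C ⊗ id_A) ∘ (id_C ⊗ ψ) ∘ (id_C ⊗ m_A ⊗ id_C) ∘ (ψ ⊗ id_A ⊗ id_C)`. -/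
def OeqRHS (ψ : A ⊗[k] C →ₗ[k] C ⊗[k] A) :
    (A ⊗[k] C) ⊗[k] (A ⊗[k] C) →ₗ[k] C ⊗[k] A :=
  rTensor A (LinearMap.mul' k C)
    ∘ₗ (TensorProduct.assoc k C C A).symm.toLinearMap
    ∘ₗ lTensor C ψ
    ∘ₗ (TensorProduct.assoc k C A C).toLinearMap
    ∘ₗ TensorProduct.map (lTensor C (LinearMap.mul' k A)) LinearMap.id
    ∘ₗ TensorProduct.map (TensorProduct.assoc k C A A).toLinearMap LinearMap.id
    ∘ₗ (TensorProduct.assoc k (C ⊗[k] A) A C).symm.toLinearMap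
    ∘ₗ rTensor (A ⊗[k] C) ψ

/-- The set of relations `c ⊗ (b·a) - (c·F(b)) ⊗ a` defining the push-forward `C ⊗_B A`. -/
def relSet (B : Subalgebra k A) (F : B →ₐ[k] C) : Set (C ⊗[k] A) :=
  {x | ∃ (c : C) (b : B) (a : A), x = c ⊗ₜ ((b : A) * a) - (c * F b) ⊗ₜ a}

/-- The subspace spanned by the relations defining the push-forward `C ⊗_B A`. -/
def relSpan (B : Subalgebra k A) (F : B →ₐ[k] C) : Submodule k (C ⊗[k] A) :=
  Submodule.span k (relSet k A C B F)

end Twist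
section Star
variable [StarRing k] [TrivialStar k]
variable (X : Type*) [Ring X] [Algebra k X] [StarRing X] [StarModule k X]
variable (Y : Type*) [Ring Y] [Algebra k Y] [StarRing Y] [StarModule k Y]

/-- The map `(∗_Y ⊗ ∗_X) ∘ flip : X ⊗ Y → Y ⊗ X`, `x ⊗ y ↦ y* ⊗ x*`. -/
def starFlip : X ⊗[k] Y →ₗ[k] Y ⊗[k] X :=
  TensorProduct.lift (LinearMap.mk₂ k (fun x y => (star y : Y) ⊗ₜ[k] (star x : X))
    (fun x x' y => by simp [star_add, TensorProduct.tmul_add])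
    (fun r x y => by simp [star_smul, star_trivial, TensorProduct.tmul_smul])
    (fun x y y' => by simp [star_add, TensorProduct.add_tmul])
    (fun r x y => by simp [star_smul, star_trivial, TensorProduct.smul_tmul']))

@[simp] lemma starFlip_tmul (x : X) (y : Y) :
    starFlip k X Y (x ⊗ₜ y) = (star y : Y) ⊗ₜ (star x : X) := rfl

end Star
section Flat
variable (R : Type*) [Ring R] (M : Type*) [AddCommGroup M] [Module R M]

/-- Flatness of a left module over a (possibly noncommutative) ring, via the equational
criterion: every linear relation among elements of `M` is a consequence of linear relations
holding in `R`. -/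
def IsFlatLeft : Prop :=
  ∀ (n : ℕ) (r : Fin n → R) (x : Fin n → M), (∑ i, r i • x i) = 0 →
    ∃ (m : ℕ) (a : Fin n → Fin m → R) (y : Fin m → M),
      (∀ i, x i = ∑ j, a i j • y j) ∧ ∀ j, (∑ i, r i * a i j) = 0

/-- Faithful flatness of a left module over a (possibly noncommutative) ring: flatness
together with `I·M ≠ M` for every maximal right ideal `I` of `R`. -/
def IsFaithfullyFlatLeft : Prop :=
  IsFlatLeft R M ∧ ∀ I : Submodule Rᵐᵒᵖ R, IsCoatom I →
    AddSubgroup.closure {z : M | ∃ i ∈ I, ∃ v : M, z = i • v} ≠ ⊤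

end Flat
section Hopf
variable (A : Type*) [Ring A] [Algebra k A] (C : Type*) [Ring C] [Algebra k C]
variable (H : Type*) [Ring H] [HopfAlgebra k H]

/-- `δ : A → A ⊗ H` makes `A` a right `H`-comodule algebra: `δ` is an algebra map (built in)
which is coassociative and counital. -/
def IsComodAlg (δ : A →ₐ[k] A ⊗[k] H) : Prop :=
  ((TensorProduct.assoc k A H H).toLinearMap ∘ₗ rTensor H δ.toLinearMap ∘ₗ δ.toLinearMap
      = lTensor A (Coalgebra.comul (R := k) (A := H)) ∘ₗ δ.toLinearMap)
    ∧ ((TensorProduct.rid k A).toLinearMap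
        ∘ₗ lTensor A (Coalgebra.counit (R := k) (A := H)) ∘ₗ δ.toLinearMap
      = LinearMap.id)

/-- The subalgebra `A^{co H}` of coinvariant elements of a comodule algebra. -/
def coinv (δ : A →ₐ[k] A ⊗[k] H) : Subalgebra k A where
  carrier := {a | δ a = a ⊗ₜ[k] (1 : H)}
  mul_mem' := by
    intro a b ha hb
    simp only [Set.mem_setOf_eq] at *
    rw [map_mul, ha, hb, Algebra.TensorProduct.tmul_mul_tmul, one_mul]
  one_mem' := by
    simp only [Set.mem_setOf_eq, map_one, Algebra.TensorProduct.one_def]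
  add_mem' := by
    intro a b ha hb
    simp only [Set.mem_setOf_eq] at *
    rw [map_add, ha, hb, TensorProduct.add_tmul]
  algebraMap_mem' := by
    intro r
    simp only [Set.mem_setOf_eq, AlgHom.commutes, Algebra.TensorProduct.algebraMap_apply]

/-- The canonical map `A ⊗ A → A ⊗ H`, `a ⊗ a' ↦ a a'₍₀₎ ⊗ a'₍₁₎` (before taking the
quotient `A ⊗_B A`). -/
def chi0 (δ : A →ₐ[k] A ⊗[k] H) : A ⊗[k] A →ₗ[k] A ⊗[k] H :=
  rTensor H (LinearMap.mul' k A)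
    ∘ₗ (TensorProduct.assoc k A A H).symm.toLinearMap
    ∘ₗ lTensor A δ.toLinearMap

/-- The coaction `id_C ⊗ δ` on `C ⊗ A` (with `C` a trivial comodule), as a map
`C ⊗ A → (C ⊗ A) ⊗ H`. -/
def coactT (δ : A →ₐ[k] A ⊗[k] H) : C ⊗[k] A →ₗ[k] (C ⊗[k] A) ⊗[k] H :=
  (TensorProduct.assoc k C A H).symm.toLinearMap ∘ₗ lTensor C δ.toLinearMap

/-- `ψ : A ⊗ C → C ⊗ A` is a morphism of right `H`-comodules:
`(id_C ⊗ δ) ∘ ψ = (ψ ⊗ id_H) ∘ (id_A ⊗ flip) ∘ (δ ⊗ id_C)`. -/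
def IsComodMor (δ : A →ₐ[k] A ⊗[k] H) (ψ : A ⊗[k] C →ₗ[k] C ⊗[k] A) : Prop :=
  lTensor C δ.toLinearMap ∘ₗ ψ
    = (TensorProduct.assoc k C A H).toLinearMap
        ∘ₗ rTensor H ψ
        ∘ₗ (TensorProduct.assoc k A C H).symm.toLinearMap
        ∘ₗ lTensor A (TensorProduct.comm k H C).toLinearMap
        ∘ₗ (TensorProduct.assoc k A H C).toLinearMap
        ∘ₗ rTensor C δ.toLinearMap

variable {k H} in
/-- Given a multiplication `m` on `P`, the induced multiplication on `P ⊗ H`. -/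
def tmulH {P : Type*} [AddCommGroup P] [Module k P] (m : P →ₗ[k] P →ₗ[k] P) :
    P ⊗[k] H →ₗ[k] P ⊗[k] H →ₗ[k] P ⊗[k] H :=
  TensorProduct.map₂ m (LinearMap.mul k H)

variable {k H} in
/-- The canonical Galois map `P ⊗ P → P ⊗ H`, `x ⊗ y ↦ (x ·_m y₍₀₎) ⊗ y₍₁₎`, for a
multiplication `m` and a coaction `db` on `P`. -/
def chiP {P : Type*} [AddCommGroup P] [Module k P]
    (m : P →ₗ[k] P →ₗ[k] P) (db : P →ₗ[k] P ⊗[k] H) : P ⊗[k] P →ₗ[k] P ⊗[k] H :=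
  rTensor H (TensorProduct.lift m)
    ∘ₗ (TensorProduct.assoc k P P H).symm.toLinearMap
    ∘ₗ lTensor P db

variable {k C} in
/-- The span of the relations `(x ·_m e c) ⊗ y - x ⊗ (e c ·_m y)` defining the balanced tensor
product `P ⊗_C P` over the image of `C` in `P`. -/
def balSpan {P : Type*} [AddCommGroup P] [Module k P]
    (m : P →ₗ[k] P →ₗ[k] P) (e : C → P) : Submodule k (P ⊗[k] P) :=
  Submodule.span k {z | ∃ (x y : P) (c : C), z = (m x (e c)) ⊗ₜ y - x ⊗ₜ (m (e c) y)}

variable {k H} in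
/-- Coassociativity of a coaction `db : P → P ⊗ H`. -/
def Coassoc {P : Type*} [AddCommGroup P] [Module k P] (db : P →ₗ[k] P ⊗[k] H) : Prop :=
  (TensorProduct.assoc k P H H).toLinearMap ∘ₗ rTensor H db ∘ₗ db
    = lTensor P (Coalgebra.comul (R := k) (A := H)) ∘ₗ db

variable {k H} in
/-- Counitality of a coaction `db : P → P ⊗ H`. -/
def Counital {P : Type*} [AddCommGroup P] [Module k P] (db : P →ₗ[k] P ⊗[k] H) : Prop :=
  (TensorProduct.rid k P).toLinearMap
      ∘ₗ lTensor P (Coalgebra.counit (R := k) (A := H)) ∘ₗ db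
    = LinearMap.id

variable {k H} in
/-- Convolution product of two linear maps `H → P`, with respect to a multiplication `m`
on `P`. -/
def convP {P : Type*} [AddCommGroup P] [Module k P]
    (m : P →ₗ[k] P →ₗ[k] P) (f g : H →ₗ[k] P) : H →ₗ[k] P :=
  TensorProduct.lift m ∘ₗ TensorProduct.map f g ∘ₗ Coalgebra.comul (R := k) (A := H)

variable {k H} in
/-- The unit for convolution: `h ↦ ε(h) • u`. -/
def convUnit {P : Type*} [AddCommGroup P] [Module k P] (u : P) : H →ₗ[k] P :=
  (Coalgebra.counit (R := k) (A := H)).smulRight u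

end Hopf

section HopfPush
variable (A : Type*) [Ring A] [Algebra k A] (C : Type*) [Ring C] [Algebra k C]
variable (H : Type*) [Ring H] [HopfAlgebra k H]
section PushForward
variable (δ : A →ₐ[k] A ⊗[k] H) (F : coinv k A H δ →ₐ[k] C)

/-- The subspace of `C ⊗ A` defining the push-forward `C ⊗_B A`, `B = A^{co H}`. -/
def pushSpan : Submodule k (C ⊗[k] A) := relSpan k A C (coinv k A H δ) F

/-- The quotient map `C ⊗ A → C ⊗_B A`. -/
def pushQ : C ⊗[k] A →ₗ[k] (C ⊗[k] A) ⧸ pushSpan k A C H δ F :=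
  (pushSpan k A C H δ F).mkQ

/-- `\barψ = π_B ∘ ψ` is a `B`-bimodule morphism. -/
def BarBimod (ψ : A ⊗[k] C →ₗ[k] C ⊗[k] A) : Prop :=
  (∀ (b : coinv k A H δ) (a : A) (c : C),
      pushQ k A C H δ F (ψ (((b : A) * a) ⊗ₜ c))
        = pushQ k A C H δ F (rTensor A (LinearMap.mulLeft k (F b)) (ψ (a ⊗ₜ c))))
  ∧ (∀ (b : coinv k A H δ) (a : A) (c : C),
      pushQ k A C H δ F (ψ (a ⊗ₜ (c * F b)))
        = pushQ k A C H δ F (lTensor C (LinearMap.mulRight k (b : A)) (ψ (a ⊗ₜ c))))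

/-- `\barψ (1_A ⊗ c) = c ⊗_B 1_A` and `\barψ (a ⊗ 1_C) = 1_C ⊗_B a`. -/
def BarNormal (ψ : A ⊗[k] C →ₗ[k] C ⊗[k] A) : Prop :=
  (∀ c : C, pushQ k A C H δ F (ψ ((1 : A) ⊗ₜ c)) = pushQ k A C H δ F (c ⊗ₜ (1 : A)))
  ∧ (∀ a : A, pushQ k A C H δ F (ψ (a ⊗ₜ (1 : C))) = pushQ k A C H δ F ((1 : C) ⊗ₜ a))

/-- `σ` is the canonical left `C`-action on the push-forward `C ⊗_B A`:
`σ c (c' ⊗_B a) = (c c') ⊗_B a`. -/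
def SigmaSpec (σ : C →ₗ[k] ((C ⊗[k] A) ⧸ pushSpan k A C H δ F)
    →ₗ[k] ((C ⊗[k] A) ⧸ pushSpan k A C H δ F)) : Prop :=
  ∀ (c : C) (x : C ⊗[k] A),
    σ c (pushQ k A C H δ F x) = pushQ k A C H δ F (rTensor A (LinearMap.mulLeft k c) x)

/-- The distributive law `\barψ (a ⊗ c c') = c^ψ · \barψ (a^ψ ⊗ c')`, where `·` denotes the
left `C`-action `σ` on the push-forward. -/
def BarDistrib (ψ : A ⊗[k] C →ₗ[k] C ⊗[k] A)
    (σ : C →ₗ[k] ((C ⊗[k] A) ⧸ pushSpan k A C H δ F)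
      →ₗ[k] ((C ⊗[k] A) ⧸ pushSpan k A C H δ F)) : Prop :=
  (pushQ k A C H δ F ∘ₗ ψ) ∘ₗ lTensor A (LinearMap.mul' k C)
    = TensorProduct.lift σ
        ∘ₗ lTensor C (pushQ k A C H δ F ∘ₗ ψ)
        ∘ₗ (TensorProduct.assoc k C A C).toLinearMap
        ∘ₗ rTensor C ψ
        ∘ₗ (TensorProduct.assoc k A C C).symm.toLinearMap

/-- The embedding `C → C ⊗_B A`, `c ↦ c ⊗_B 1_A`. -/
def eC : C → (C ⊗[k] A) ⧸ pushSpan k A C H δ F :=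
  fun c => pushQ k A C H δ F (c ⊗ₜ (1 : A))

end PushForward

section Galois
variable (δ : A →ₐ[k] A ⊗[k] H)

/-- The subspace of `A ⊗ A` defining the balanced tensor product `A ⊗_B A`, `B = A^{co H}`. -/
def galSpan : Submodule k (A ⊗[k] A) :=
  relSpan k A A (coinv k A H δ) (coinv k A H δ).val

/-- The quotient map `A ⊗ A → A ⊗_B A`. -/
def galQ : A ⊗[k] A →ₗ[k] (A ⊗[k] A) ⧸ galSpan k A H δ := (galSpan k A H δ).mkQ

/-- The translation map `τ = χ⁻¹(1_A ⊗ -) : H → A ⊗_B A` obtained from a bijective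
canonical map `χ`. -/
def transMap (χ : ((A ⊗[k] A) ⧸ galSpan k A H δ) ≃ₗ[k] A ⊗[k] H) :
    H →ₗ[k] (A ⊗[k] A) ⧸ galSpan k A H δ :=
  χ.symm.toLinearMap ∘ₗ TensorProduct.mk k A H 1

end Galois
end HopfPush

set_option maxHeartbeats 1000000
set_option synthInstance.maxHeartbeats 400000

section Aux
variable (A : Type*) [Ring A] [Algebra k A] (C : Type*) [Ring C] [Algebra k C]
variable (H : Type*) [Ring H] [HopfAlgebra k H]

lemma tmul_apply (ψ : A ⊗[k] C →ₗ[k] C ⊗[k] A) (c c' : C) (a a' : A) :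
    tmul k A C ψ (c ⊗ₜ a) (c' ⊗ₜ a')
      = TensorProduct.map (LinearMap.mulLeft k c) (LinearMap.mulRight k a') (ψ (a ⊗ₜ c')) := by
  unfold tmul tmulMap
  simp only [LinearMap.coe_comp, Function.comp_apply, LinearEquiv.coe_coe,
    TensorProduct.assoc_symm_tmul, TensorProduct.map_tmul, TensorProduct.assoc_tmul,
    LinearMap.lTensor_tmul, LinearMap.id_coe, id_eq]
  induction ψ (a ⊗ₜ c') with
  | zero => simp
  | tmul d e => simp [LinearMap.mul'_apply]
  | add u v hu hv =>
    simp only [TensorProduct.tmul_add, TensorProduct.add_tmul, map_add, hu, hv]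

variable (δ : A →ₐ[k] A ⊗[k] H) (F : coinv k A H δ →ₐ[k] C)

lemma pushSpan_stable (c : C) (b : A) (z : C ⊗[k] A) (hz : z ∈ pushSpan k A C H δ F) :
    TensorProduct.map (LinearMap.mulLeft k c) (LinearMap.mulRight k b) z
      ∈ pushSpan k A C H δ F := by
  refine Submodule.span_induction ?_ ?_ ?_ ?_ hz
  · rintro x ⟨c₀, β, a, rfl⟩
    apply Submodule.subset_span
    refine ⟨c * c₀, β, a * b, ?_⟩
    simp only [map_sub, TensorProduct.map_tmul, LinearMap.mulLeft_apply,
      LinearMap.mulRight_apply]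
    rw [mul_assoc (β : A) a b, mul_assoc c c₀ (F β)]
  · simp
  · intro x y _ _ hx hy
    simpa [map_add] using Submodule.add_mem _ hx hy
  · intro r x _ hx
    simpa [map_smul] using Submodule.smul_mem _ r hx

lemma pushQ_map_congr (c : C) (b : A) {x y : C ⊗[k] A}
    (h : pushQ k A C H δ F x = pushQ k A C H δ F y) :
    pushQ k A C H δ F (TensorProduct.map (LinearMap.mulLeft k c) (LinearMap.mulRight k b) x)
      = pushQ k A C H δ F
          (TensorProduct.map (LinearMap.mulLeft k c) (LinearMap.mulRight k b) y) := by
  rw [← sub_eq_zero, ← map_sub, ← map_sub]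
  have hxy : x - y ∈ pushSpan k A C H δ F := (Submodule.Quotient.eq _).mp h
  exact (Submodule.Quotient.mk_eq_zero _).mpr (pushSpan_stable k A C H δ F c b (x - y) hxy)

lemma galSpan_stable (a : A) (z : A ⊗[k] A) (hz : z ∈ galSpan k A H δ) :
    LinearMap.rTensor A (LinearMap.mulLeft k a) z ∈ galSpan k A H δ := by
  refine Submodule.span_induction ?_ ?_ ?_ ?_ hz
  · rintro x ⟨c₀, β, a', rfl⟩
    apply Submodule.subset_span
    refine ⟨a * c₀, β, a', ?_⟩
    simp only [map_sub, LinearMap.rTensor_tmul, LinearMap.mulLeft_apply]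
    rw [mul_assoc]
  · simp
  · intro x y _ _ hx hy
    simpa [map_add] using Submodule.add_mem _ hx hy
  · intro r x _ hx
    simpa [map_smul] using Submodule.smul_mem _ r hx

/-- pre-version of left multiplication, bilinear `A → (A ⊗ A) → (A ⊗_B A)`. -/
def lmulPre : A →ₗ[k] (A ⊗[k] A) →ₗ[k] (A ⊗[k] A) ⧸ galSpan k A H δ :=
  (LinearMap.llcomp k (A ⊗[k] A) (A ⊗[k] A) ((A ⊗[k] A) ⧸ galSpan k A H δ)
      (galQ k A H δ))
    ∘ₗ (LinearMap.rTensorHom A : (A →ₗ[k] A) →ₗ[k] (A ⊗[k] A →ₗ[k] A ⊗[k] A))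
    ∘ₗ (LinearMap.mul k A)

lemma lmulPre_apply (a : A) (x : A ⊗[k] A) :
    lmulPre k A H δ a x = galQ k A H δ (LinearMap.rTensor A (LinearMap.mulLeft k a) x) := rfl

/-- Left multiplication by `a` on the first factor of `A ⊗_B A`, as a bilinear map. -/
def lmulB : A →ₗ[k] ((A ⊗[k] A) ⧸ galSpan k A H δ) →ₗ[k] (A ⊗[k] A) ⧸ galSpan k A H δ where
  toFun a := Submodule.liftQ _ (lmulPre k A H δ a)
    (fun z hz => (Submodule.Quotient.mk_eq_zero _).mpr (galSpan_stable k A H δ a z hz))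
  map_add' a a' := LinearMap.ext fun q => by
    obtain ⟨z, rfl⟩ := Submodule.mkQ_surjective _ q
    simp only [Submodule.mkQ_apply, Submodule.liftQ_apply, map_add, LinearMap.add_apply]
    rfl
  map_smul' r a := LinearMap.ext fun q => by
    obtain ⟨z, rfl⟩ := Submodule.mkQ_surjective _ q
    simp only [Submodule.mkQ_apply, Submodule.liftQ_apply, map_smul, LinearMap.smul_apply,
      RingHom.id_apply]
    rfl

lemma lmulB_mk (a : A) (x : A ⊗[k] A) :
    lmulB k A H δ a (galQ k A H δ x)
      = galQ k A H δ (LinearMap.rTensor A (LinearMap.mulLeft k a) x) := rfl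

lemma chi0_tmul (a a' : A) :
    chi0 k A H δ (a ⊗ₜ a') = LinearMap.rTensor H (LinearMap.mulLeft k a) (δ a') := by
  unfold chi0
  simp only [LinearMap.coe_comp, Function.comp_apply, LinearEquiv.coe_coe,
    LinearMap.lTensor_tmul, AlgHom.toLinearMap_apply]
  generalize δ a' = w
  induction w with
  | zero => simp
  | tmul a₀ h => simp [LinearMap.mul'_apply]
  | add u v hu hv => simp only [TensorProduct.tmul_add, map_add, hu, hv]

/-- `Tδ : A ⊗ H → A ⊗_B A`, `a ⊗ h ↦ a · τ(h)`. -/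
def Tdelta (χ : ((A ⊗[k] A) ⧸ galSpan k A H δ) ≃ₗ[k] A ⊗[k] H) :
    A ⊗[k] H →ₗ[k] (A ⊗[k] A) ⧸ galSpan k A H δ :=
  TensorProduct.lift ((lmulB k A H δ).compl₂ (transMap k A H δ χ))

lemma Tdelta_tmul (χ : ((A ⊗[k] A) ⧸ galSpan k A H δ) ≃ₗ[k] A ⊗[k] H) (a : A) (h : H) :
    Tdelta k A H δ χ (a ⊗ₜ h) = lmulB k A H δ a (transMap k A H δ χ h) := rfl

/-- `D₀ : A ⊗ A → (C⊗_BA) ⊗_C (C⊗_BA)`, `u ⊗ v ↦ (c' ⊗_B u) ⊗_C (1 ⊗_B v)`. -/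
def Dzero (m : ((C ⊗[k] A) ⧸ pushSpan k A C H δ F) →ₗ[k]
      ((C ⊗[k] A) ⧸ pushSpan k A C H δ F) →ₗ[k] ((C ⊗[k] A) ⧸ pushSpan k A C H δ F))
    (c' : C) :
    A ⊗[k] A →ₗ[k] ((((C ⊗[k] A) ⧸ pushSpan k A C H δ F) ⊗[k]
      ((C ⊗[k] A) ⧸ pushSpan k A C H δ F)) ⧸ balSpan m (eC k A C H δ F)) :=
  (balSpan m (eC k A C H δ F)).mkQ
    ∘ₗ TensorProduct.map (pushQ k A C H δ F ∘ₗ TensorProduct.mk k C A c')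
        (pushQ k A C H δ F ∘ₗ TensorProduct.mk k C A 1)

lemma Dzero_tmul (m) (c' : C) (u v : A) :
    Dzero k A C H δ F m c' (u ⊗ₜ v)
      = (balSpan m (eC k A C H δ F)).mkQ
          (pushQ k A C H δ F (c' ⊗ₜ u) ⊗ₜ pushQ k A C H δ F ((1 : C) ⊗ₜ v)) := rfl

/-- The descent of `D₀` to `A ⊗_B A`. -/
def Dmap (m) (c' : C) (hker : galSpan k A H δ ≤ LinearMap.ker (Dzero k A C H δ F m c')) :
    ((A ⊗[k] A) ⧸ galSpan k A H δ) →ₗ[k]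
      ((((C ⊗[k] A) ⧸ pushSpan k A C H δ F) ⊗[k]
        ((C ⊗[k] A) ⧸ pushSpan k A C H δ F)) ⧸ balSpan m (eC k A C H δ F)) :=
  Submodule.liftQ _ (Dzero k A C H δ F m c') hker

lemma Dmap_mk (m) (c' : C) (hker) (x : A ⊗[k] A) :
    Dmap k A C H δ F m c' hker (galQ k A H δ x) = Dzero k A C H δ F m c' x := rfl

end Aux
end Paper

set_option maxHeartbeats 4000000
set_option synthInstance.maxHeartbeats 1000000

open Paper in
/-- under the hypotheses of the push-forward theorem, the translation map of
the `H`-Galois extension `C ⊆ C ⊗^ψ_B A` is `τ^ψ(h) = (1_C ⊗_B h⁽¹⁾) ⊗_C (1_C ⊗_B h⁽²⁾)`: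
`χ^ψ(τ^ψ(h)) = (1_C ⊗_B 1_A) ⊗ h` and `(m^ψ ⊗_C id) ∘ (id ⊗ τ^ψ) ∘ χ^ψ = id`. -/
theorem pushforward_translation_map
    (k : Type*) [Field k] (A : Type*) [Ring A] [Algebra k A]
    (C : Type*) [Ring C] [Algebra k C] (H : Type*) [Ring H] [HopfAlgebra k H]
    (δ : A →ₐ[k] A ⊗[k] H) (hδ : IsComodAlg k A H δ)
    (χ : ((A ⊗[k] A) ⧸ galSpan k A H δ) ≃ₗ[k] A ⊗[k] H)
    (hχ : ∀ x : A ⊗[k] A, χ (galQ k A H δ x) = chi0 k A H δ x)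
    (hff : IsFaithfullyFlatLeft (coinv k A H δ) A)
    (F : coinv k A H δ →ₐ[k] C)
    (ψ : A ⊗[k] C →ₗ[k] C ⊗[k] A) (hψ : IsTwistingMap k A C ψ)
    (hcomod : IsComodMor k A C H δ ψ)
    (hbar : BarBimod k A C H δ F ψ) (hnor : BarNormal k A C H δ F ψ)
    (σ : C →ₗ[k] ((C ⊗[k] A) ⧸ pushSpan k A C H δ F)
      →ₗ[k] ((C ⊗[k] A) ⧸ pushSpan k A C H δ F))
    (hσ : SigmaSpec k A C H δ F σ) (hdist : BarDistrib k A C H δ F ψ σ)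
    (m : ((C ⊗[k] A) ⧸ pushSpan k A C H δ F) →ₗ[k]
      ((C ⊗[k] A) ⧸ pushSpan k A C H δ F) →ₗ[k] ((C ⊗[k] A) ⧸ pushSpan k A C H δ F))
    (hm : ∀ x y : C ⊗[k] A,
      m (pushQ k A C H δ F x) (pushQ k A C H δ F y) = pushQ k A C H δ F (tmul k A C ψ x y))
    (db : ((C ⊗[k] A) ⧸ pushSpan k A C H δ F) →ₗ[k]
      ((C ⊗[k] A) ⧸ pushSpan k A C H δ F) ⊗[k] H)
    (hdb : ∀ x : C ⊗[k] A,
      db (pushQ k A C H δ F x) = rTensor H (pushQ k A C H δ F) (coactT k A C H δ x))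
    -- the canonical map `χ^ψ` of the extension `C ⊆ C ⊗^ψ_B A`, as a bijection:
    (echi : ((((C ⊗[k] A) ⧸ pushSpan k A C H δ F) ⊗[k]
        ((C ⊗[k] A) ⧸ pushSpan k A C H δ F)) ⧸ balSpan m (eC k A C H δ F)) ≃ₗ[k]
          ((C ⊗[k] A) ⧸ pushSpan k A C H δ F) ⊗[k] H)
    (hechi : ∀ z, echi ((balSpan m (eC k A C H δ F)).mkQ z) = chiP m db z)
    -- the map `A ⊗_B A → (C ⊗^ψ_B A) ⊗_C (C ⊗^ψ_B A)`, `a ⊗_B a' ↦ (1 ⊗_B a) ⊗_C (1 ⊗_B a')`: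
    (jmap : ((A ⊗[k] A) ⧸ galSpan k A H δ) →ₗ[k]
      ((((C ⊗[k] A) ⧸ pushSpan k A C H δ F) ⊗[k]
        ((C ⊗[k] A) ⧸ pushSpan k A C H δ F)) ⧸ balSpan m (eC k A C H δ F)))
    (hjmap : ∀ x : A ⊗[k] A,
      jmap (galQ k A H δ x)
        = (balSpan m (eC k A C H δ F)).mkQ
            (TensorProduct.map (pushQ k A C H δ F ∘ₗ TensorProduct.mk k C A 1)
              (pushQ k A C H δ F ∘ₗ TensorProduct.mk k C A 1) x))
    -- the left multiplication of `C ⊗^ψ_B A` on the first factor of the balanced product: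
    (lact : ((C ⊗[k] A) ⧸ pushSpan k A C H δ F) →ₗ[k]
      (((((C ⊗[k] A) ⧸ pushSpan k A C H δ F) ⊗[k]
        ((C ⊗[k] A) ⧸ pushSpan k A C H δ F)) ⧸ balSpan m (eC k A C H δ F)) →ₗ[k]
       ((((C ⊗[k] A) ⧸ pushSpan k A C H δ F) ⊗[k]
        ((C ⊗[k] A) ⧸ pushSpan k A C H δ F)) ⧸ balSpan m (eC k A C H δ F))))
    (hlact : ∀ (p x y : (C ⊗[k] A) ⧸ pushSpan k A C H δ F),
      lact p ((balSpan m (eC k A C H δ F)).mkQ (x ⊗ₜ y))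
        = (balSpan m (eC k A C H δ F)).mkQ ((m p x) ⊗ₜ y)) :
    -- `χ^ψ ∘ τ^ψ = (1_C ⊗_B 1_A) ⊗ -` :
    (∀ h : H,
      echi (jmap (transMap k A H δ χ h))
        = pushQ k A C H δ F ((1 : C) ⊗ₜ (1 : A)) ⊗ₜ h)
    -- and `(m^ψ ⊗_C id) ∘ (id ⊗ τ^ψ) ∘ χ^ψ = id` :
    ∧ (∀ z, TensorProduct.lift
        (lact.compl₂ (jmap ∘ₗ transMap k A H δ χ)) (echi z) = z) := by
  
  classical
  -- surjectivity of the quotient maps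
  have hsurjQ : ∀ x : (C ⊗[k] A) ⧸ pushSpan k A C H δ F,
      ∃ u : C ⊗[k] A, x = pushQ k A C H δ F u := by
    intro x; obtain ⟨u, hu⟩ := Submodule.mkQ_surjective _ x; exact ⟨u, hu.symm⟩
  have hsurjG : ∀ x : (A ⊗[k] A) ⧸ galSpan k A H δ,
      ∃ u : A ⊗[k] A, x = galQ k A H δ u := by
    intro x; obtain ⟨u, hu⟩ := Submodule.mkQ_surjective _ x; exact ⟨u, hu.symm⟩
  -- basic computation rules for the twisted product in the quotient
  have hm2 : ∀ (c : C) (a b : A),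
      pushQ k A C H δ F (tmul k A C ψ (c ⊗ₜ a) ((1 : C) ⊗ₜ b))
        = pushQ k A C H δ F (c ⊗ₜ (a * b)) := by
    intro c a b
    rw [tmul_apply, pushQ_map_congr k A C H δ F c b (hnor.2 a)]
    simp
  have hm3 : ∀ c' : C,
      pushQ k A C H δ F (tmul k A C ψ ((1 : C) ⊗ₜ (1 : A)) (c' ⊗ₜ (1 : A)))
        = pushQ k A C H δ F (c' ⊗ₜ (1 : A)) := by
    intro c'
    rw [tmul_apply]
    simp only [LinearMap.mulLeft_one, LinearMap.mulRight_one, TensorProduct.map_id,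
      LinearMap.id_apply]
    exact hnor.1 c'
  have hm4 : ∀ (c : C) (a : A) (β : coinv k A H δ),
      pushQ k A C H δ F (tmul k A C ψ (c ⊗ₜ a) (F β ⊗ₜ (1 : A)))
        = pushQ k A C H δ F (c ⊗ₜ (a * (β : A))) := by
    intro c a β
    rw [tmul_apply]
    have h3 : ∀ z : C ⊗[k] A, LinearMap.lTensor C (LinearMap.mulRight k (β : A)) z
        = TensorProduct.map (LinearMap.mulLeft k (1 : C))
            (LinearMap.mulRight k (β : A)) z := by
      intro z; rw [LinearMap.mulLeft_one]; rfl
    have h1 : pushQ k A C H δ F (ψ (a ⊗ₜ F β))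
        = pushQ k A C H δ F ((1 : C) ⊗ₜ (a * (β : A))) := by
      have h2 := hbar.2 β a 1
      rw [one_mul] at h2
      rw [h2, h3, pushQ_map_congr k A C H δ F 1 (β : A) (hnor.2 a)]
      simp
    rw [pushQ_map_congr k A C H δ F c 1 h1]
    simp
  -- the defining relation of the push-forward
  have hrel : ∀ (c : C) (β : coinv k A H δ) (a : A),
      pushQ k A C H δ F (c ⊗ₜ ((β : A) * a)) = pushQ k A C H δ F ((c * F β) ⊗ₜ a) := by
    intro c β a
    exact (Submodule.Quotient.eq _).mpr (Submodule.subset_span ⟨c, β, a, rfl⟩)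
  -- the balanced relation
  have hbal : ∀ (p y : (C ⊗[k] A) ⧸ pushSpan k A C H δ F) (c : C),
      (balSpan m (eC k A C H δ F)).mkQ ((m p (eC k A C H δ F c)) ⊗ₜ y)
        = (balSpan m (eC k A C H δ F)).mkQ (p ⊗ₜ (m (eC k A C H δ F c) y)) := by
    intro p y c
    exact (Submodule.Quotient.eq _).mpr (Submodule.subset_span ⟨p, y, c, rfl⟩)
  -- associativity of m
  have hmassoc : ∀ x y z : (C ⊗[k] A) ⧸ pushSpan k A C H δ F,
      m (m x y) z = m x (m y z) := by
    intro x y z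
    obtain ⟨u, rfl⟩ := hsurjQ x
    obtain ⟨v, rfl⟩ := hsurjQ y
    obtain ⟨w, rfl⟩ := hsurjQ z
    rw [hm, hm, hm, hm, hψ]
  have hlactcomp : ∀ (p q : (C ⊗[k] A) ⧸ pushSpan k A C H δ F) w,
      lact (m p q) w = lact p (lact q w) := by
    intro p q w
    obtain ⟨w0, rfl⟩ := Submodule.mkQ_surjective _ w
    induction w0 with
    | zero => simp
    | tmul x y => rw [hlact, hlact, hlact, hmassoc]
    | add u v hu hv => simp only [map_add, hu, hv]
  -- χ intertwines left multiplication
  have hχl : ∀ (a : A) (q : (A ⊗[k] A) ⧸ galSpan k A H δ),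
      χ (lmulB k A H δ a q) = LinearMap.rTensor H (LinearMap.mulLeft k a) (χ q) := by
    intro a q
    obtain ⟨x, rfl⟩ := hsurjG q
    rw [lmulB_mk, hχ, hχ]
    induction x with
    | zero => simp
    | tmul u v =>
      rw [LinearMap.rTensor_tmul, LinearMap.mulLeft_apply, chi0_tmul, chi0_tmul,
        LinearMap.mulLeft_mul, LinearMap.rTensor_comp, LinearMap.comp_apply]
    | add u v hu hv => simp only [map_add, hu, hv]
  have hχτ : ∀ h : H, χ (transMap k A H δ χ h) = (1 : A) ⊗ₜ h := by
    intro h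
    simp [transMap]
  have hχTδ : ∀ w : A ⊗[k] H, χ (Tdelta k A H δ χ w) = w := by
    intro w
    induction w with
    | zero => simp
    | tmul a h =>
      rw [Tdelta_tmul, hχl, hχτ]
      simp
    | add u v hu hv => simp only [map_add, hu, hv]
  -- key identity : a₍₀₎ τ(a₍₁₎) = 1 ⊗_B a
  have hkey : ∀ a : A, Tdelta k A H δ χ (δ a) = galQ k A H δ ((1 : A) ⊗ₜ a) := by
    intro a
    apply χ.injective
    rw [hχTδ, hχ, chi0_tmul, LinearMap.mulLeft_one, LinearMap.rTensor_id]
    rfl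
  -- the coaction on the push-forward, on generators
  have hdbπ : ∀ (c' : C) (a' : A),
      db (pushQ k A C H δ F (c' ⊗ₜ a'))
        = LinearMap.rTensor H (pushQ k A C H δ F ∘ₗ TensorProduct.mk k C A c') (δ a') := by
    intro c' a'
    rw [hdb]
    unfold coactT
    simp only [LinearMap.coe_comp, Function.comp_apply, LinearEquiv.coe_coe,
      LinearMap.lTensor_tmul, AlgHom.toLinearMap_apply]
    generalize δ a' = w
    induction w with
    | zero => simp
    | tmul a₀ h =>
      simp [TensorProduct.assoc_symm_tmul]
    | add u v hu hv => simp only [TensorProduct.tmul_add, map_add, hu, hv]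
  -- the canonical map of the push-forward, on generators
  have hchiP : ∀ (p : (C ⊗[k] A) ⧸ pushSpan k A C H δ F) (c' : C) (a' : A),
      chiP m db (p ⊗ₜ pushQ k A C H δ F (c' ⊗ₜ a'))
        = LinearMap.rTensor H
            ((m p) ∘ₗ pushQ k A C H δ F ∘ₗ TensorProduct.mk k C A c') (δ a') := by
    intro p c' a'
    unfold chiP
    simp only [LinearMap.coe_comp, Function.comp_apply, LinearEquiv.coe_coe,
      LinearMap.lTensor_tmul]
    rw [hdbπ]
    generalize δ a' = w
    induction w with
    | zero => simp
    | tmul a₀ h =>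
      simp [TensorProduct.assoc_symm_tmul, TensorProduct.lift.tmul]
    | add u v hu hv => simp only [TensorProduct.tmul_add, map_add, hu, hv]
  -- Part 1, on generators
  have h1 : ∀ x : A ⊗[k] A,
      echi (jmap (galQ k A H δ x))
        = LinearMap.rTensor H (pushQ k A C H δ F ∘ₗ TensorProduct.mk k C A 1)
            (chi0 k A H δ x) := by
    intro x
    induction x with
    | zero => simp
    | tmul a a' =>
      rw [hjmap, chi0_tmul]
      rw [show TensorProduct.map (pushQ k A C H δ F ∘ₗ TensorProduct.mk k C A 1)
          (pushQ k A C H δ F ∘ₗ TensorProduct.mk k C A 1) (a ⊗ₜ a')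
          = pushQ k A C H δ F ((1 : C) ⊗ₜ a) ⊗ₜ pushQ k A C H δ F ((1 : C) ⊗ₜ a')
          from rfl]
      rw [hechi, hchiP]
      generalize δ a' = w
      induction w with
      | zero => simp
      | tmul a₀ h =>
        simp only [LinearMap.rTensor_tmul, LinearMap.coe_comp, Function.comp_apply,
          TensorProduct.mk_apply, LinearMap.mulLeft_apply]
        rw [hm, hm2]
      | add u v hu hv => simp only [map_add, hu, hv]
    | add u v hu hv => simp only [map_add, hu, hv]
  have part1 : ∀ h : H,
      echi (jmap (transMap k A H δ χ h))
        = pushQ k A C H δ F ((1 : C) ⊗ₜ (1 : A)) ⊗ₜ h := by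
    intro h
    obtain ⟨x, hx⟩ := hsurjG (transMap k A H δ χ h)
    rw [hx, h1, ← hχ, ← hx, hχτ]
    simp
  -- well-definedness of the D-map
  have hker : ∀ c' : C,
      galSpan k A H δ ≤ LinearMap.ker (Dzero k A C H δ F m c') := by
    intro c'
    rw [galSpan, relSpan, Submodule.span_le]
    rintro x ⟨u, β, v, rfl⟩
    simp only [SetLike.mem_coe, LinearMap.mem_ker, map_sub, sub_eq_zero]
    rw [Dzero_tmul, Dzero_tmul]
    have s1 : pushQ k A C H δ F ((1 : C) ⊗ₜ ((β : A) * v))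
        = pushQ k A C H δ F (F β ⊗ₜ v) := by
      rw [hrel, one_mul]
    have s2 : m (eC k A C H δ F (F β)) (pushQ k A C H δ F ((1 : C) ⊗ₜ v))
        = pushQ k A C H δ F (F β ⊗ₜ v) := by
      show m (pushQ k A C H δ F (F β ⊗ₜ (1 : A))) _ = _
      rw [hm, hm2, one_mul]
    have s4 : m (pushQ k A C H δ F (c' ⊗ₜ u)) (eC k A C H δ F (F β))
        = pushQ k A C H δ F (c' ⊗ₜ (u * (β : A))) := by
      show m _ (pushQ k A C H δ F (F β ⊗ₜ (1 : A))) = _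
      rw [hm, hm4]
    rw [s1, ← s2, ← hbal, s4]
    rfl
  -- the key computation : lact (c' ⊗ a₀) (τψ h) = D (a₀ · τ(h))
  have hΦ : ∀ (c' : C) (a₀ : A) (h : H),
      lact (pushQ k A C H δ F (c' ⊗ₜ a₀)) (jmap (transMap k A H δ χ h))
        = Dmap k A C H δ F m c' (hker c')
            (lmulB k A H δ a₀ (transMap k A H δ χ h)) := by
    intro c' a₀ h
    obtain ⟨t, ht⟩ := hsurjG (transMap k A H δ χ h)
    rw [ht, hjmap, lmulB_mk, Dmap_mk]
    clear ht
    induction t with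
    | zero => simp
    | tmul u v =>
      simp only [TensorProduct.map_tmul, LinearMap.coe_comp, Function.comp_apply,
        TensorProduct.mk_apply, LinearMap.rTensor_tmul, LinearMap.mulLeft_apply]
      rw [hlact, hm, hm2, Dzero_tmul]
    | add t1 t2 ih1 ih2 => simp only [map_add, ih1, ih2]
  have hΦT : ∀ (c' : C) (w : A ⊗[k] H),
      TensorProduct.lift
          ((lact ∘ₗ pushQ k A C H δ F ∘ₗ TensorProduct.mk k C A c').compl₂
            (jmap ∘ₗ transMap k A H δ χ)) w
        = Dmap k A C H δ F m c' (hker c') (Tdelta k A H δ χ w) := by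
    intro c' w
    induction w with
    | zero => simp
    | tmul a₀ h =>
      simp only [TensorProduct.lift.tmul, LinearMap.compl₂_apply, LinearMap.coe_comp,
        Function.comp_apply, TensorProduct.mk_apply, Tdelta_tmul]
      exact hΦ c' a₀ h
    | add u v hu hv => simp only [map_add, hu, hv]
  have hS : ∀ (c' : C) (a' : A),
      TensorProduct.lift
          ((lact ∘ₗ pushQ k A C H δ F ∘ₗ TensorProduct.mk k C A c').compl₂
            (jmap ∘ₗ transMap k A H δ χ)) (δ a')
        = (balSpan m (eC k A C H δ F)).mkQ
            (pushQ k A C H δ F ((1 : C) ⊗ₜ (1 : A)) ⊗ₜ pushQ k A C H δ F (c' ⊗ₜ a')) := by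
    intro c' a'
    rw [hΦT, hkey, Dmap_mk, Dzero_tmul]
    have e1 : pushQ k A C H δ F (c' ⊗ₜ (1 : A))
        = m (pushQ k A C H δ F ((1 : C) ⊗ₜ (1 : A))) (eC k A C H δ F c') := by
      show _ = m _ (pushQ k A C H δ F (c' ⊗ₜ (1 : A)))
      rw [hm, hm3]
    have e2 : m (eC k A C H δ F c') (pushQ k A C H δ F ((1 : C) ⊗ₜ a'))
        = pushQ k A C H δ F (c' ⊗ₜ a') := by
      show m (pushQ k A C H δ F (c' ⊗ₜ (1 : A))) _ = _
      rw [hm, hm2, one_mul]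
    rw [e1, hbal, e2]
  refine ⟨part1, ?_⟩
  intro z
  obtain ⟨w, rfl⟩ := Submodule.mkQ_surjective _ z
  rw [hechi]
  induction w with
  | zero => simp
  | add u v hu hv => simp only [map_add, hu, hv]
  | tmul p q =>
    obtain ⟨y, rfl⟩ := hsurjQ q
    induction y with
    | zero => simp
    | add y1 y2 ih1 ih2 => simp only [map_add, TensorProduct.tmul_add, ih1, ih2]
    | tmul c' a' =>
      obtain ⟨x, rfl⟩ := hsurjQ p
      induction x with
      | zero => simp
      | add x1 x2 ih1 ih2 => simp only [map_add, TensorProduct.add_tmul, ih1, ih2]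
      | tmul c a =>
        rw [hchiP]
        have hw : ∀ w : A ⊗[k] H,
            TensorProduct.lift (lact.compl₂ (jmap ∘ₗ transMap k A H δ χ))
                (LinearMap.rTensor H
                  ((m (pushQ k A C H δ F (c ⊗ₜ a))) ∘ₗ pushQ k A C H δ F
                    ∘ₗ TensorProduct.mk k C A c') w)
              = lact (pushQ k A C H δ F (c ⊗ₜ a))
                  (TensorProduct.lift
                    ((lact ∘ₗ pushQ k A C H δ F ∘ₗ TensorProduct.mk k C A c').compl₂
                      (jmap ∘ₗ transMap k A H δ χ)) w) := by
          intro w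
          induction w with
          | zero => simp
          | tmul a₀ h =>
            simp only [LinearMap.rTensor_tmul, TensorProduct.lift.tmul,
              LinearMap.compl₂_apply, LinearMap.coe_comp, Function.comp_apply,
              TensorProduct.mk_apply]
            rw [hlactcomp]
          | add u v hu hv => simp only [map_add, hu, hv]
        rw [hw, hS, hlact, hm, hm2, mul_one]
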